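/- A measure-preserving transformation f of a probability space is ergodic if and only if f belongs to ⋂ G(φ, a, ε), where φ ranges over a countable dense subset D of C⁰(M,ℝ), a over the rationals, and ε over positive rationals; here G(φ, a, ε) is the set of f such that either m[φ_f ≥ a] ≥ 1−ε or m[φ_f ≤ a] ≥ 1−ε. -/

import Mathlib

open MeasureTheory Filter
open scoped ENNReal

/-- The set where the Birkhoff average of `φ` under `f` exists and is at least `a`. -/
def birkhoffGe {M : Type*} (f : M → M) (φ : M → ℝ) (a : ℝ) : Set M :=
  {x | ∃ L : ℝ, a ≤ L ∧
    Tendsto (fun n : ℕ => (1 / (n : ℝ)) * ∑ j ∈ Finset.range n, φ (f^[j] x))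
      atTop (nhds L)}

/-- The set where the Birkhoff average of `φ` under `f` exists and is at most `a`. -/
def birkhoffLe {M : Type*} (f : M → M) (φ : M → ℝ) (a : ℝ) : Set M :=
  {x | ∃ L : ℝ, L ≤ a ∧
    Tendsto (fun n : ℕ => (1 / (n : ℝ)) * ∑ j ∈ Finset.range n, φ (f^[j] x))
      atTop (nhds L)}

namespace ErgodicGAux

/-- Birkhoff sum. -/
noncomputable def S {M : Type*} (f : M → M) (ψ : M → ℝ) (n : ℕ) (x : M) : ℝ :=
  ∑ j ∈ Finset.range n, ψ (f^[j] x)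

/-- Birkhoff average. -/
noncomputable def A {M : Type*} (f : M → M) (ψ : M → ℝ) (n : ℕ) (x : M) : ℝ :=
  (1 / (n : ℝ)) * S f ψ n x

variable {M : Type*} {f : M → M} {ψ : M → ℝ}

lemma S_succ' (n : ℕ) (x : M) : S f ψ (n + 1) x = ψ x + S f ψ n (f x) := by
  rw [S, Finset.sum_range_succ']
  simp [S, Function.iterate_succ_apply, add_comm]

lemma S_succ (n : ℕ) (x : M) : S f ψ (n + 1) x = S f ψ n x + ψ (f^[n] x) := by
  rw [S, Finset.sum_range_succ]; rfl

lemma abs_S_le {C : ℝ} (hC : ∀ x, |ψ x| ≤ C) (n : ℕ) (x : M) : |S f ψ n x| ≤ n * C := by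
  calc |S f ψ n x| ≤ ∑ j ∈ Finset.range n, |ψ (f^[j] x)| := Finset.abs_sum_le_sum_abs _ _
  _ ≤ ∑ _j ∈ Finset.range n, C := Finset.sum_le_sum fun j _ => hC _
  _ = n * C := by simp [mul_comm]

lemma abs_A_le {C : ℝ} (hC : ∀ x, |ψ x| ≤ C) (hC0 : 0 ≤ C) (n : ℕ) (x : M) :
    |A f ψ n x| ≤ C := by
  rcases Nat.eq_zero_or_pos n with rfl | hn
  · simp [A, S]; exact hC0
  · rw [A, abs_mul]
    have h1 : |1 / (n : ℝ)| = 1 / n := by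
      rw [abs_of_nonneg]; positivity
    rw [h1]
    calc 1 / (n : ℝ) * |S f ψ n x| ≤ 1 / n * (n * C) := by
          apply mul_le_mul_of_nonneg_left (abs_S_le hC n x); positivity
    _ = C := by field_simp

lemma measurable_S [MeasurableSpace M] (hf : Measurable f) (hψ : Measurable ψ) (n : ℕ) :
    Measurable (S f ψ n) :=
  Finset.measurable_sum _ fun j _ => hψ.comp (hf.iterate j)

lemma measurable_A [MeasurableSpace M] (hf : Measurable f) (hψ : Measurable ψ) (n : ℕ) :
    Measurable (A f ψ n) :=
  (measurable_S hf hψ n).const_mul _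

lemma bddAbove_seq {u : ℕ → ℝ} {C : ℝ} (h : ∀ n, |u n| ≤ C) :
    IsBoundedUnder (· ≤ ·) atTop u :=
  isBoundedUnder_of ⟨C, fun n => (abs_le.1 (h n)).2⟩

lemma bddBelow_seq {u : ℕ → ℝ} {C : ℝ} (h : ∀ n, |u n| ≤ C) :
    IsBoundedUnder (· ≥ ·) atTop u :=
  isBoundedUnder_of ⟨-C, fun n => (abs_le.1 (h n)).1⟩

/-- limsup of bounded sequences whose difference tends to zero are equal. -/
lemma limsup_eq_limsup_of_tendsto_sub {u v : ℕ → ℝ} {C : ℝ}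
    (hu : ∀ n, |u n| ≤ C) (hv : ∀ n, |v n| ≤ C)
    (h : Tendsto (fun n => u n - v n) atTop (nhds 0)) :
    limsup u atTop = limsup v atTop := by
  have key : ∀ (u v : ℕ → ℝ), (∀ n, |u n| ≤ C) → (∀ n, |v n| ≤ C) →
      Tendsto (fun n => u n - v n) atTop (nhds 0) → limsup u atTop ≤ limsup v atTop := by
    intro u v hu hv h
    refine le_of_forall_pos_le_add fun δ hδ => ?_
    have hev : ∀ᶠ n in atTop, u n ≤ v n + δ := by
      filter_upwards [h.eventually (gt_mem_nhds hδ)] with n hn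
      linarith
    calc limsup u atTop ≤ limsup (fun n => v n + δ) atTop := by
          exact limsup_le_limsup hev ((bddBelow_seq hu).isCoboundedUnder_le)
            (isBoundedUnder_of ⟨C + δ, fun n => by have := (abs_le.1 (hv n)).2; linarith⟩)
    _ = limsup v atTop + δ :=
          limsup_add_const atTop v δ (bddAbove_seq hv) ((bddBelow_seq hv).isCoboundedUnder_le)
  exact le_antisymm (key u v hu hv h)
    (key v u hv hu (by simpa using h.neg))

/-- `liminf u = - limsup (-u)` for bounded real sequences. -/
lemma liminf_eq_neg_limsup {u : ℕ → ℝ} {C : ℝ} (hu : ∀ n, |u n| ≤ C) :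
    liminf u atTop = - limsup (fun n => - u n) atTop := by
  have := Antitone.map_liminf_of_continuousAt (F := atTop) (f := fun x : ℝ => -x)
    (fun a b hab => neg_le_neg hab) u (continuous_neg.continuousAt)
    ((bddAbove_seq hu).isCoboundedUnder_ge) (bddBelow_seq hu)
  rw [show (fun x : ℝ => -x) ∘ u = fun n => - u n from rfl] at this
  rw [← this, neg_neg]

end ErgodicGAux

namespace ErgodicGAux

variable {M : Type*} [MeasurableSpace M] {m : Measure M} {f : M → M} {ψ : M → ℝ}

lemma nonempty_of_prob (m : Measure M) [IsProbabilityMeasure m] : Nonempty M := by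
  by_contra h
  rw [not_nonempty_iff] at h
  have h1 : (Set.univ : Set M) = ∅ := Set.univ_eq_empty_iff.mpr h
  have := measure_univ (μ := m)
  rw [h1, measure_empty] at this
  exact zero_ne_one this

lemma integrable_of_bounded [IsFiniteMeasure m] {g : M → ℝ} (hg : Measurable g) {C : ℝ}
    (hC : ∀ x, |g x| ≤ C) : Integrable g m :=
  (integrable_const C).mono' hg.aestronglyMeasurable
    (ae_of_all _ fun x => by rw [Real.norm_eq_abs]; exact hC x)

lemma integral_comp_eq (hf : MeasurePreserving f m m) {g : M → ℝ} (hg : Measurable g) :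
    ∫ x, g (f x) ∂m = ∫ x, g x ∂m := by
  conv_rhs => rw [← hf.map_eq]
  rw [integral_map hf.aemeasurable (hf.map_eq.symm ▸ hg.aestronglyMeasurable)]

/-- The Garsia maximal function. -/
noncomputable def Phi (f : M → M) (ψ : M → ℝ) : ℕ → M → ℝ
  | 0 => fun _ => 0
  | (N + 1) => fun x => max 0 (ψ x + Phi f ψ N (f x))

lemma Phi_nonneg (N : ℕ) (x : M) : 0 ≤ Phi f ψ N x := by
  cases N with
  | zero => exact le_refl _
  | succ N => exact le_max_left _ _

lemma measurable_Phi (hf : Measurable f) (hψ : Measurable ψ) (N : ℕ) :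
    Measurable (Phi f ψ N) := by
  induction N with
  | zero => exact measurable_const
  | succ N ih => exact measurable_const.max (hψ.add (ih.comp hf))

lemma Phi_succ_le (N : ℕ) : ∀ x : M, Phi f ψ N x ≤ Phi f ψ (N + 1) x := by
  induction N with
  | zero => exact fun x => Phi_nonneg 1 x
  | succ N ih =>
    intro x
    exact max_le_max le_rfl (add_le_add_right (ih (f x)) _)

lemma Phi_mono (x : M) : Monotone fun N => Phi f ψ N x :=
  monotone_nat_of_le_succ fun N => Phi_succ_le N x

lemma S_le_Phi (n : ℕ) : ∀ x : M, S f ψ n x ≤ Phi f ψ n x := by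
  induction n with
  | zero => intro x; simp [S, Phi]
  | succ n ih =>
    intro x
    rw [S_succ']
    exact le_max_of_le_right (add_le_add_right (ih (f x)) _)

lemma abs_Phi_le {C : ℝ} (hC : ∀ x, |ψ x| ≤ C) (hC0 : 0 ≤ C) (N : ℕ) :
    ∀ x : M, |Phi f ψ N x| ≤ N * C := by
  induction N with
  | zero => intro x; simp [Phi]
  | succ N ih =>
    intro x
    rw [abs_of_nonneg (Phi_nonneg _ _)]
    have h1 : ψ x ≤ C := (abs_le.1 (hC x)).2
    have h2 : Phi f ψ N (f x) ≤ N * C := by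
      have := ih (f x); rw [abs_of_nonneg (Phi_nonneg _ _)] at this; exact this
    have h3 : (0 : ℝ) ≤ (N + 1 : ℕ) * C := by positivity
    refine max_le h3 ?_
    push_cast
    nlinarith

/-- **Maximal ergodic theorem** (Garsia's version): if almost every point has some positive
Birkhoff sum, then the integral of `ψ` is nonnegative. -/
theorem maximal_ergodic [IsProbabilityMeasure m] (hf : MeasurePreserving f m m)
    (hψ : Measurable ψ) {C : ℝ} (hC : ∀ x, |ψ x| ≤ C)
    (hU : m {x | ∃ n, 1 ≤ n ∧ 0 < S f ψ n x} = 1) :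
    0 ≤ ∫ x, ψ x ∂m := by
  have : Nonempty M := nonempty_of_prob m
  have hC0 : 0 ≤ C := le_trans (abs_nonneg _) (hC (Classical.arbitrary M))
  set E : ℕ → Set M := fun N => {x | 0 < Phi f ψ (N + 1) x} with hE
  have hEmeas : ∀ N, MeasurableSet (E N) := fun N =>
    measurableSet_lt measurable_const (measurable_Phi hf.measurable hψ (N + 1))
  have hEmono : Monotone E := by
    intro a b hab x hx
    exact lt_of_lt_of_le hx (Phi_mono x (by omega : a + 1 ≤ b + 1))
  have intΦ : ∀ N, Integrable (Phi f ψ N) m := fun N =>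
    integrable_of_bounded (measurable_Phi hf.measurable hψ N) (abs_Phi_le hC hC0 N)
  have intψ : Integrable ψ m := integrable_of_bounded hψ hC
  -- Step 1 : `0 ≤ ∫_{E N} ψ`.
  have step1 : ∀ N, 0 ≤ ∫ x in E N, ψ x ∂m := by
    intro N
    set h : M → ℝ := fun x => Phi f ψ (N + 1) x - Phi f ψ N (f x) with hh
    have hcomp : Integrable (fun x => Phi f ψ N (f x)) m :=
      integrable_of_bounded (g := fun x => Phi f ψ N (f x))
        ((measurable_Phi hf.measurable hψ N).comp hf.measurable)
        (C := N * C) (fun x => abs_Phi_le hC hC0 N (f x))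
    have hhint : Integrable h m := (intΦ (N + 1)).sub hcomp
    have hint0 : 0 ≤ ∫ x, h x ∂m := by
      rw [hh]
      rw [integral_sub (intΦ (N + 1)) hcomp]
      rw [integral_comp_eq hf (measurable_Phi hf.measurable hψ N)]
      exact sub_nonneg.2 (integral_mono (intΦ N) (intΦ (N + 1)) (Phi_succ_le N))
    have hsplit : ∫ x, h x ∂m = ∫ x in E N, h x ∂m + ∫ x in (E N)ᶜ, h x ∂m :=
      (integral_add_compl (hEmeas N) hhint).symm
    have h2 : ∫ x in (E N)ᶜ, h x ∂m ≤ 0 := by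
      refine setIntegral_nonpos (hEmeas N).compl fun x hx => ?_
      have hx0 : Phi f ψ (N + 1) x = 0 :=
        le_antisymm (not_lt.1 hx) (Phi_nonneg _ _)
      rw [hh]
      simp only [hx0, zero_sub, neg_nonpos]
      exact Phi_nonneg _ _
    have h3 : ∫ x in E N, h x ∂m ≤ ∫ x in E N, ψ x ∂m := by
      refine setIntegral_mono_on hhint.integrableOn intψ.integrableOn (hEmeas N)
        fun x hx => ?_
      have hpos : (0 : ℝ) < Phi f ψ (N + 1) x := hx
      have hmax : Phi f ψ (N + 1) x = ψ x + Phi f ψ N (f x) := by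
        rcases le_or_gt (ψ x + Phi f ψ N (f x)) 0 with hle | hlt
        · exfalso
          have : Phi f ψ (N + 1) x = 0 := max_eq_left hle
          rw [this] at hpos; exact lt_irrefl _ hpos
        · exact max_eq_right hlt.le
      rw [hh]; simp only [hmax]; ring_nf; exact le_refl _
    linarith
  -- Step 2 : the union has full measure.
  set U : Set M := ⋃ N, E N with hUdef
  have hUmeas : MeasurableSet U := MeasurableSet.iUnion hEmeas
  have hUfull : m U = 1 := by
    refine le_antisymm prob_le_one ?_
    rw [← hU]
    refine measure_mono fun x hx => ?_
    obtain ⟨n, hn1, hn⟩ := hx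
    obtain ⟨k, rfl⟩ : ∃ k, n = k + 1 := ⟨n - 1, by omega⟩
    exact Set.mem_iUnion.2 ⟨k, lt_of_lt_of_le hn (S_le_Phi (k + 1) x)⟩
  -- Step 3 : pass to the limit.
  have step3 : Tendsto (fun N => ∫ x in E N, ψ x ∂m) atTop (nhds (∫ x in U, ψ x ∂m)) :=
    tendsto_setIntegral_of_monotone hEmeas hEmono intψ.integrableOn
  have step4 : ∫ x in U, ψ x ∂m = ∫ x, ψ x ∂m := by
    have hcompl : m Uᶜ = 0 := by
      rw [measure_compl hUmeas (measure_ne_top m U), hUfull, measure_univ, tsub_self]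
    have : ∫ x in Uᶜ, ψ x ∂m = 0 := by
      rw [Measure.restrict_eq_zero.2 hcompl, integral_zero_measure]
    rw [← integral_add_compl hUmeas intψ, this, add_zero]
  rw [← step4]
  exact ge_of_tendsto' step3 step1

end ErgodicGAux

namespace ErgodicGAux

variable {M : Type*} [MeasurableSpace M] {m : Measure M} {f : M → M} {φ : M → ℝ}

lemma A_zero (f : M → M) (ψ : M → ℝ) (x : M) : A f ψ 0 x = 0 := by
  simp [A, S]

lemma ae_limsup_le [IsProbabilityMeasure m] (hE : Ergodic f m)
    (hφm : Measurable φ) {C : ℝ} (hC : ∀ x, |φ x| ≤ C) {ε : ℝ} (hε : 0 < ε) :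
    ∀ᵐ x ∂m, limsup (fun n => A f φ n x) atTop ≤ (∫ x, φ x ∂m) + ε := by
  have hf : MeasurePreserving f m m := hE.toMeasurePreserving
  set I : ℝ := ∫ x, φ x ∂m with hI
  set ψ : M → ℝ := fun x => φ x - (I + ε) with hψ
  have hψm : Measurable ψ := hφm.sub measurable_const
  set Cψ : ℝ := C + |I + ε| with hCψdef
  have hCψ : ∀ x, |ψ x| ≤ Cψ := fun x =>
    (abs_sub (φ x) (I + ε)).trans (add_le_add_left (hC x) _)
  have hCψ0 : 0 ≤ Cψ := by
    have : Nonempty M := nonempty_of_prob m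
    exact le_trans (abs_nonneg _) (hCψ (Classical.arbitrary M))
  have habs : ∀ x n, |A f ψ n x| ≤ Cψ := fun x n => abs_A_le hCψ hCψ0 n x
  set g : M → ℝ := fun x => limsup (fun n => A f ψ n x) atTop with hg
  have hgm : Measurable g := Measurable.limsup (measurable_A hf.measurable hψm)
  have ginv : ∀ x, g (f x) = g x := by
    intro x
    refine limsup_eq_limsup_of_tendsto_sub (C := Cψ) (habs (f x)) (habs x) ?_
    have key : ∀ n : ℕ, A f ψ n (f x) - A f ψ n x = 1 / (n : ℝ) * (ψ (f^[n] x) - ψ x) := by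
      intro n
      rw [A, A, ← mul_sub]
      congr 1
      have h1 := S_succ' (f := f) (ψ := ψ) n x
      have h2 := S_succ (f := f) (ψ := ψ) n x
      linarith
    refine squeeze_zero_norm (fun n => ?_) (tendsto_const_div_atTop_nhds_zero_nat (2 * Cψ))
    rw [key]
    rcases Nat.eq_zero_or_pos n with rfl | hn
    · simp
    rw [Real.norm_eq_abs, abs_mul, abs_of_nonneg (by positivity : (0:ℝ) ≤ 1 / (n:ℝ))]
    have h3 : |ψ (f^[n] x) - ψ x| ≤ 2 * Cψ := (abs_sub _ _).trans (by
      have := hCψ (f^[n] x); have := hCψ x; linarith)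
    calc 1 / (n : ℝ) * |ψ (f^[n] x) - ψ x| ≤ 1 / n * (2 * Cψ) := by
          apply mul_le_mul_of_nonneg_left h3; positivity
    _ = 2 * Cψ / n := by ring
  set Aset : Set M := {x | 0 < g x} with hAset
  have hAmeas : MeasurableSet Aset := measurableSet_lt measurable_const hgm
  have hAinv : f ⁻¹' Aset = Aset := by
    ext x
    simp only [Set.mem_preimage, hAset, Set.mem_setOf_eq, ginv x]
  rcases hE.ae_empty_or_univ hAmeas hAinv with h0 | h1
  · -- `g ≤ 0` a.e.
    have hnm : ∀ᵐ x ∂m, x ∉ Aset := measure_eq_zero_iff_ae_notMem.mp (ae_eq_empty.mp h0)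
    filter_upwards [hnm] with x hx
    have hgx : g x ≤ 0 := not_lt.1 hx
    have hrel : ∀ᶠ n in atTop, A f φ n x = A f ψ n x + (I + ε) := by
      filter_upwards [eventually_ge_atTop 1] with n hn
      have hn0 : (n : ℝ) ≠ 0 := Nat.cast_ne_zero.2 (by omega)
      have hS : S f ψ n x = S f φ n x - n * (I + ε) := by
        rw [S, S]
        simp only [hψ]
        rw [Finset.sum_sub_distrib, Finset.sum_const, Finset.card_range]
        simp [nsmul_eq_mul, mul_add]
      rw [A, A, hS]
      field_simp
      ring
    calc limsup (fun n => A f φ n x) atTop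
        = limsup (fun n => A f ψ n x + (I + ε)) atTop := limsup_congr hrel
    _ = limsup (fun n => A f ψ n x) atTop + (I + ε) :=
        limsup_add_const atTop _ _ (bddAbove_seq (habs x))
          ((bddBelow_seq (habs x)).isCoboundedUnder_le)
    _ ≤ 0 + (I + ε) := by exact add_le_add_left hgx _
    _ = I + ε := by ring
  · -- contradiction with the maximal ergodic theorem
    exfalso
    have hsub : Aset ⊆ {x | ∃ n, 1 ≤ n ∧ 0 < S f ψ n x} := by
      intro x hx
      by_contra hcon
      simp only [Set.mem_setOf_eq] at hcon
      push_neg at hcon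
      have hle : ∀ n, A f ψ n x ≤ 0 := by
        intro n
        rcases Nat.eq_zero_or_pos n with rfl | hn
        · rw [A_zero]
        · exact mul_nonpos_of_nonneg_of_nonpos (by positivity) (hcon n hn)
      have : g x ≤ 0 :=
        limsup_le_of_le ((bddBelow_seq (habs x)).isCoboundedUnder_le)
          (Eventually.of_forall hle)
      exact absurd hx (not_lt.2 this)
    have hfull : m {x | ∃ n, 1 ≤ n ∧ 0 < S f ψ n x} = 1 := by
      refine le_antisymm prob_le_one ?_
      calc (1 : ℝ≥0∞) = m Aset := by
            rw [measure_congr h1, measure_univ]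
      _ ≤ _ := measure_mono hsub
    have hmax := maximal_ergodic hf hψm hCψ hfull
    have hint : ∫ x, ψ x ∂m = -ε := by
      rw [hψ]
      rw [integral_sub (integrable_of_bounded hφm hC) (integrable_const _)]
      simp [hI]
    rw [hint] at hmax
    linarith

lemma A_neg (f : M → M) (ψ : M → ℝ) (n : ℕ) (x : M) :
    A f (fun y => -ψ y) n x = - A f ψ n x := by
  simp [A, S, Finset.sum_neg_distrib]

/-- **Birkhoff's pointwise ergodic theorem** for bounded measurable functions
under an ergodic map. -/
theorem ae_tendsto_birkhoff [IsProbabilityMeasure m] (hE : Ergodic f m)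
    (hφm : Measurable φ) {C : ℝ} (hC : ∀ x, |φ x| ≤ C) :
    ∀ᵐ x ∂m, Tendsto (fun n => A f φ n x) atTop (nhds (∫ x, φ x ∂m)) := by
  have hC0 : 0 ≤ C := by
    have : Nonempty M := nonempty_of_prob m
    exact le_trans (abs_nonneg _) (hC (Classical.arbitrary M))
  have habs : ∀ x n, |A f φ n x| ≤ C := fun x n => abs_A_le hC hC0 n x
  set I : ℝ := ∫ x, φ x ∂m with hI
  have hupper : ∀ᵐ x ∂m, limsup (fun n => A f φ n x) atTop ≤ I := by
    have h := ae_all_iff.2 fun k : ℕ =>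
      ae_limsup_le hE hφm hC (ε := 1 / (k + 1)) (by positivity)
    filter_upwards [h] with x hx
    refine le_of_forall_pos_le_add fun δ hδ => ?_
    obtain ⟨k, hk⟩ := exists_nat_one_div_lt hδ
    exact (hx k).trans (by linarith [hk.le])
  have hlower : ∀ᵐ x ∂m, I ≤ liminf (fun n => A f φ n x) atTop := by
    have hnegm : Measurable fun y => -φ y := hφm.neg
    have hnegC : ∀ x, |(fun y => -φ y) x| ≤ C := fun x => by
      simpa [abs_neg] using hC x
    have h := ae_all_iff.2 fun k : ℕ =>
      ae_limsup_le hE hnegm hnegC (ε := 1 / (k + 1)) (by positivity)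
    filter_upwards [h] with x hx
    have hneg : limsup (fun n => - A f φ n x) atTop ≤ -I := by
      have h2 : ∀ k : ℕ, limsup (fun n => - A f φ n x) atTop ≤ -I + 1 / (k + 1) := by
        intro k
        have := hx k
        simp only [A_neg] at this
        rwa [show ∫ x, (fun y => -φ y) x ∂m = -I by rw [hI, ← integral_neg]] at this
      refine le_of_forall_pos_le_add fun δ hδ => ?_
      obtain ⟨k, hk⟩ := exists_nat_one_div_lt hδ
      exact (h2 k).trans (by linarith [hk.le])
    rw [liminf_eq_neg_limsup (habs x)]
    linarith
  filter_upwards [hupper, hlower] with x hx1 hx2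
  exact tendsto_of_le_liminf_of_limsup_le hx2 hx1 (bddAbove_seq (habs x)) (bddBelow_seq (habs x))

end ErgodicGAux

namespace ErgodicGAux

variable {M : Type*} [MeasurableSpace M] {m : Measure M} {f : M → M} {φ : M → ℝ}

lemma prob_eq_one_of_ae [IsProbabilityMeasure m] {s : Set M} (h : ∀ᵐ x ∂m, x ∈ s) :
    m s = 1 := by
  refine le_antisymm prob_le_one ?_
  have hc : m sᶜ = 0 := by
    rw [ae_iff] at h
    exact h
  calc (1 : ℝ≥0∞) = m Set.univ := measure_univ.symm
  _ = m (s ∪ sᶜ) := by rw [Set.union_compl_self]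
  _ ≤ m s + m sᶜ := measure_union_le _ _
  _ = m s := by rw [hc, add_zero]

lemma ae_mem_of_prob_eq_one [IsProbabilityMeasure m] {s : Set M} (hs : MeasurableSet s)
    (h : m s = 1) : ∀ᵐ x ∂m, x ∈ s := by
  have : m sᶜ = 0 := by
    rw [measure_compl hs (measure_ne_top m s), h, measure_univ, tsub_self]
  rw [ae_iff]
  exact this

/-- `birkhoffGe` expressed via `A`. -/
lemma birkhoffGe_eq (f : M → M) (φ : M → ℝ) (a : ℝ) :
    birkhoffGe f φ a = {x | ∃ L : ℝ, a ≤ L ∧ Tendsto (fun n => A f φ n x) atTop (nhds L)} :=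
  rfl

lemma birkhoffLe_eq (f : M → M) (φ : M → ℝ) (a : ℝ) :
    birkhoffLe f φ a = {x | ∃ L : ℝ, L ≤ a ∧ Tendsto (fun n => A f φ n x) atTop (nhds L)} :=
  rfl

lemma limit_mem_Icc {x : M} {C L : ℝ} (hC : ∀ x, |φ x| ≤ C) (hC0 : 0 ≤ C)
    (hL : Tendsto (fun n => A f φ n x) atTop (nhds L)) : -C ≤ L ∧ L ≤ C := by
  constructor
  · exact ge_of_tendsto hL (Eventually.of_forall fun n => (abs_le.1 (abs_A_le hC hC0 n x)).1)
  · exact le_of_tendsto hL (Eventually.of_forall fun n => (abs_le.1 (abs_A_le hC hC0 n x)).2)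

lemma measurableSet_birkhoffGe (hf : Measurable f) (hφ : Measurable φ) {C : ℝ}
    (hC : ∀ x, |φ x| ≤ C) (hC0 : 0 ≤ C) (a : ℝ) :
    MeasurableSet (birkhoffGe f φ a) := by
  have habs : ∀ x n, |A f φ n x| ≤ C := fun x n => abs_A_le hC hC0 n x
  have : birkhoffGe f φ a =
      {x | liminf (fun n => A f φ n x) atTop = limsup (fun n => A f φ n x) atTop} ∩
      {x | a ≤ limsup (fun n => A f φ n x) atTop} := by
    ext x
    rw [birkhoffGe_eq]
    constructor
    · rintro ⟨L, haL, hL⟩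
      refine ⟨?_, ?_⟩
      · simp only [Set.mem_setOf_eq]; rw [hL.liminf_eq, hL.limsup_eq]
      · simp only [Set.mem_setOf_eq]; rw [hL.limsup_eq]; exact haL
    · rintro ⟨h1, h2⟩
      exact ⟨limsup (fun n => A f φ n x) atTop, h2,
        tendsto_of_liminf_eq_limsup h1 rfl (bddAbove_seq (habs x)) (bddBelow_seq (habs x))⟩
  rw [this]
  have hliminf : Measurable fun x => liminf (fun n => A f φ n x) atTop :=
    Measurable.liminf (measurable_A hf hφ)
  have hlimsup : Measurable fun x => limsup (fun n => A f φ n x) atTop :=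
    Measurable.limsup (measurable_A hf hφ)
  exact (measurableSet_eq_fun hliminf hlimsup).inter (measurableSet_le measurable_const hlimsup)

lemma measurableSet_birkhoffLe (hf : Measurable f) (hφ : Measurable φ) {C : ℝ}
    (hC : ∀ x, |φ x| ≤ C) (hC0 : 0 ≤ C) (a : ℝ) :
    MeasurableSet (birkhoffLe f φ a) := by
  have habs : ∀ x n, |A f φ n x| ≤ C := fun x n => abs_A_le hC hC0 n x
  have : birkhoffLe f φ a =
      {x | liminf (fun n => A f φ n x) atTop = limsup (fun n => A f φ n x) atTop} ∩
      {x | limsup (fun n => A f φ n x) atTop ≤ a} := by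
    ext x
    rw [birkhoffLe_eq]
    constructor
    · rintro ⟨L, hLa, hL⟩
      refine ⟨?_, ?_⟩
      · simp only [Set.mem_setOf_eq]; rw [hL.liminf_eq, hL.limsup_eq]
      · simp only [Set.mem_setOf_eq]; rw [hL.limsup_eq]; exact hLa
    · rintro ⟨h1, h2⟩
      exact ⟨limsup (fun n => A f φ n x) atTop, h2,
        tendsto_of_liminf_eq_limsup h1 rfl (bddAbove_seq (habs x)) (bddBelow_seq (habs x))⟩
  rw [this]
  have hliminf : Measurable fun x => liminf (fun n => A f φ n x) atTop :=
    Measurable.liminf (measurable_A hf hφ)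
  have hlimsup : Measurable fun x => limsup (fun n => A f φ n x) atTop :=
    Measurable.limsup (measurable_A hf hφ)
  exact (measurableSet_eq_fun hliminf hlimsup).inter (measurableSet_le hlimsup measurable_const)

/-- From the `ε`-family of inequalities to a full-measure statement. -/
lemma full_of_eps [IsProbabilityMeasure m] {G L : Set M}
    (h : ∀ ε : ℚ, 0 < ε → (ENNReal.ofReal (1 - (ε : ℝ)) ≤ m G ∨
      ENNReal.ofReal (1 - (ε : ℝ)) ≤ m L)) :
    m G = 1 ∨ m L = 1 := by
  by_contra hcon
  push_neg at hcon
  obtain ⟨hG, hL⟩ := hcon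
  have hG1 : m G < 1 := lt_of_le_of_ne prob_le_one hG
  have hL1 : m L < 1 := lt_of_le_of_ne prob_le_one hL
  set r : ℝ≥0∞ := max (m G) (m L) with hr
  have hr1 : r < 1 := max_lt hG1 hL1
  have hrtop : r ≠ ⊤ := (hr1.trans ENNReal.one_lt_top).ne
  have hrr : r.toReal < 1 := by
    rw [← ENNReal.toReal_one]
    exact ENNReal.toReal_strict_mono ENNReal.one_ne_top hr1
  have hrnn : 0 ≤ r.toReal := ENNReal.toReal_nonneg
  obtain ⟨ε, hε0, hε1⟩ := exists_rat_btwn (sub_pos.2 hrr)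
  have hε0' : (0 : ℚ) < ε := by exact_mod_cast hε0
  have hkey : r < ENNReal.ofReal (1 - (ε : ℝ)) := by
    calc r = ENNReal.ofReal r.toReal := (ENNReal.ofReal_toReal hrtop).symm
    _ < ENNReal.ofReal (1 - (ε : ℝ)) := by
        rw [ENNReal.ofReal_lt_ofReal_iff (by linarith)]
        linarith
  rcases h ε hε0' with h' | h'
  · exact absurd (h'.trans (le_max_left _ _)) (not_le.2 hkey)
  · exact absurd (h'.trans (le_max_right _ _)) (not_le.2 hkey)

end ErgodicGAux

namespace ErgodicGAux

variable {M : Type*} [MeasurableSpace M] {m : Measure M} {f : M → M} {φ : M → ℝ}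

lemma nonempty_of_prob_one [IsProbabilityMeasure m] {s : Set M} (h : m s = 1) : s.Nonempty := by
  by_contra hcon
  rw [Set.not_nonempty_iff_eq_empty] at hcon
  rw [hcon, measure_empty] at h
  exact zero_ne_one h

/-- If for every rational `a` one of the two sets has full measure, then the Birkhoff
averages converge a.e. to a constant. -/
lemma exists_ae_tendsto_of_G [IsProbabilityMeasure m] (hf : Measurable f)
    (hφm : Measurable φ) {C : ℝ} (hC : ∀ x, |φ x| ≤ C)
    (hG : ∀ a : ℚ, m (birkhoffGe f φ (a : ℝ)) = 1 ∨ m (birkhoffLe f φ (a : ℝ)) = 1) :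
    ∃ c : ℝ, ∀ᵐ x ∂m, Tendsto (fun n => A f φ n x) atTop (nhds c) := by
  have hC0 : 0 ≤ C := by
    have : Nonempty M := nonempty_of_prob m
    exact le_trans (abs_nonneg _) (hC (Classical.arbitrary M))
  set Aord : Set ℚ := {a : ℚ | m (birkhoffGe f φ (a : ℝ)) = 1} with hAord
  -- `Aord` is nonempty
  have hne : Aord.Nonempty := by
    obtain ⟨q, hq⟩ := exists_rat_lt (-C)
    refine ⟨q, ?_⟩
    rcases hG q with h' | h'
    · exact h'
    · exfalso
      obtain ⟨x, L, hLq, hL⟩ := nonempty_of_prob_one h'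
      have := (limit_mem_Icc hC hC0 hL).1
      linarith
  -- `Aord` is bounded above
  have hbdd : BddAbove ((fun a : ℚ => (a : ℝ)) '' Aord) := by
    refine ⟨C, ?_⟩
    rintro y ⟨a, ha, rfl⟩
    obtain ⟨x, L, hLa, hL⟩ := nonempty_of_prob_one ha
    have := (limit_mem_Icc hC hC0 hL).2
    linarith
  set c : ℝ := sSup ((fun a : ℚ => (a : ℝ)) '' Aord) with hc
  refine ⟨c, ?_⟩
  -- the countable family of a.e. statements
  have hQ : ∀ b : ℚ, ∀ᵐ x ∂m,
      ((b : ℝ) < c → ∃ L : ℝ, (b : ℝ) ≤ L ∧ Tendsto (fun n => A f φ n x) atTop (nhds L)) ∧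
      (c < (b : ℝ) → ∃ L : ℝ, L ≤ (b : ℝ) ∧ Tendsto (fun n => A f φ n x) atTop (nhds L)) := by
    intro b
    rcases lt_trichotomy ((b : ℝ)) c with hbc | hbc | hbc
    · obtain ⟨y, ⟨a, ha, rfl⟩, hby⟩ := exists_lt_of_lt_csSup (hne.image _) hbc
      have hmem := ae_mem_of_prob_eq_one
        (measurableSet_birkhoffGe hf hφm hC hC0 (a : ℝ)) ha
      filter_upwards [hmem] with x hx
      refine ⟨fun _ => ?_, fun hcb => absurd (hbc.trans hcb) (lt_irrefl _)⟩
      obtain ⟨L, hLa, hL⟩ := hx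
      exact ⟨L, le_trans hby.le hLa, hL⟩
    · filter_upwards with x
      exact ⟨fun h' => absurd (hbc ▸ h') (lt_irrefl _),
        fun h' => absurd (hbc ▸ h') (lt_irrefl _)⟩
    · have hnotin : b ∉ Aord := by
        intro hmem
        exact absurd (le_csSup hbdd ⟨b, hmem, rfl⟩) (not_le.2 hbc)
      have h' : m (birkhoffLe f φ (b : ℝ)) = 1 := (hG b).resolve_left hnotin
      have hmem := ae_mem_of_prob_eq_one
        (measurableSet_birkhoffLe hf hφm hC hC0 (b : ℝ)) h'
      filter_upwards [hmem] with x hx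
      exact ⟨fun h'' => absurd (h''.trans hbc) (lt_irrefl _), fun _ => hx⟩
  filter_upwards [ae_all_iff.2 hQ] with x hx
  -- first, the limit exists
  obtain ⟨b0, hb0⟩ := exists_rat_lt c
  obtain ⟨L, _, hL⟩ := (hx b0).1 hb0
  -- now show `L = c`
  have hLc : L = c := by
    refine le_antisymm ?_ ?_
    · by_contra hcon
      push_neg at hcon
      obtain ⟨b, hb1, hb2⟩ := exists_rat_btwn hcon
      obtain ⟨L', hL'b, hL'⟩ := (hx b).2 hb1
      rw [tendsto_nhds_unique hL hL'] at hb2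
      exact absurd (hL'b.trans_lt hb2) (lt_irrefl _)
    · by_contra hcon
      push_neg at hcon
      obtain ⟨b, hb1, hb2⟩ := exists_rat_btwn hcon
      obtain ⟨L', hbL', hL'⟩ := (hx b).1 hb2
      rw [tendsto_nhds_unique hL hL'] at hb1
      exact absurd (hb1.trans_le hbL') (lt_irrefl _)
  rwa [hLc] at hL

/-- The set integral of `φ` over an invariant set equals `(m s).toReal * c` where `c` is the
a.e. limit of the Birkhoff averages. -/
lemma setIntegral_eq_of_ae_tendsto [IsProbabilityMeasure m] (hf : MeasurePreserving f m m)
    (hφm : Measurable φ) {C : ℝ} (hC : ∀ x, |φ x| ≤ C) {c : ℝ}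
    (hae : ∀ᵐ x ∂m, Tendsto (fun n => A f φ n x) atTop (nhds c))
    {s : Set M} (hs : MeasurableSet s) (hinv : f ⁻¹' s = s) :
    ∫ x in s, φ x ∂m = (m s).toReal * c := by
  have hC0 : 0 ≤ C := by
    have : Nonempty M := nonempty_of_prob m
    exact le_trans (abs_nonneg _) (hC (Classical.arbitrary M))
  have hinvj : ∀ j : ℕ, f^[j] ⁻¹' s = s := by
    intro j
    induction j with
    | zero => simp
    | succ j ih => rw [Function.iterate_succ, Set.preimage_comp, ih, hinv]
  have hint : ∀ j : ℕ, ∫ x in s, φ (f^[j] x) ∂m = ∫ x in s, φ x ∂m := by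
    intro j
    have hind : s.indicator (fun x => φ (f^[j] x)) =
        fun x => (s.indicator φ) (f^[j] x) := by
      funext x
      by_cases hx : x ∈ s
      · rw [Set.indicator_of_mem hx]
        have : f^[j] x ∈ s := by rw [← hinvj j] at hx; exact hx
        rw [Set.indicator_of_mem this]
      · rw [Set.indicator_of_notMem hx]
        have : f^[j] x ∉ s := by rw [← hinvj j] at hx; exact hx
        rw [Set.indicator_of_notMem this]
    rw [← integral_indicator hs, ← integral_indicator hs, hind]
    exact integral_comp_eq (hf.iterate j) (hφm.indicator hs)
  have h1 : ∀ n : ℕ, 1 ≤ n → ∫ x in s, A f φ n x ∂m = ∫ x in s, φ x ∂m := by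
    intro n hn
    have hn0 : (n : ℝ) ≠ 0 := Nat.cast_ne_zero.2 (by omega)
    have : ∫ x in s, A f φ n x ∂m = (1 / (n : ℝ)) * ∫ x in s, S f φ n x ∂m := by
      simp only [A]
      exact integral_const_mul _ _
    rw [this]
    have hSint : ∫ x in s, S f φ n x ∂m = n * ∫ x in s, φ x ∂m := by
      have : ∫ x in s, S f φ n x ∂m = ∑ j ∈ Finset.range n, ∫ x in s, φ (f^[j] x) ∂m := by
        simp only [S]
        refine integral_finset_sum _ fun j _ => ?_
        exact (integrable_of_bounded (g := fun x => φ (f^[j] x))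
          (hφm.comp (hf.measurable.iterate j)) (fun x => hC _)).integrableOn
      rw [this]
      rw [Finset.sum_congr rfl fun j _ => hint j]
      simp [mul_comm]
    rw [hSint]
    field_simp
  have h2 : Tendsto (fun n => ∫ x in s, A f φ n x ∂m) atTop (nhds (∫ x in s, c ∂m)) := by
    refine tendsto_integral_of_dominated_convergence (fun _ => C)
      (fun n => ((measurable_A hf.measurable hφm n).aestronglyMeasurable)) ?_ ?_ ?_
    · exact (integrable_const C).restrict
    · intro n
      exact ae_of_all _ fun x => by
        rw [Real.norm_eq_abs]; exact abs_A_le hC hC0 n x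
    · exact ae_restrict_of_ae hae
  have h3 : Tendsto (fun _ : ℕ => ∫ x in s, φ x ∂m) atTop (nhds (∫ x in s, c ∂m)) := by
    refine h2.congr' ?_
    filter_upwards [eventually_ge_atTop 1] with n hn
    exact h1 n hn
  have h4 : ∫ x in s, φ x ∂m = ∫ x in s, c ∂m := tendsto_nhds_unique tendsto_const_nhds h3
  rw [h4, setIntegral_const, smul_eq_mul]; rfl

end ErgodicGAux

namespace ErgodicGAux

variable {M : Type*} [MetricSpace M] [CompactSpace M] [MeasurableSpace M] [BorelSpace M]
  {m : Measure M} [IsProbabilityMeasure m]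

lemma restrict_eq_smul {s : Set M} (hs : MeasurableSet s)
    (hkey : ∀ ψ : C(M, ℝ), ∫ x in s, ψ x ∂m = (m s).toReal * ∫ x, ψ x ∂m) :
    m.restrict s = m s • m := by
  have hfin2 : IsFiniteMeasure ((m s) • m) := by
    refine ⟨?_⟩
    rw [Measure.smul_apply, smul_eq_mul, measure_univ, mul_one]
    exact lt_of_le_of_lt prob_le_one ENNReal.one_lt_top
  refine ext_of_forall_lintegral_eq_of_IsFiniteMeasure fun g => ?_
  set ψ : C(M, ℝ) := ⟨fun x => (g x : ℝ), NNReal.continuous_coe.comp g.continuous⟩ with hψdef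
  have hCψ : ∀ x, |ψ x| ≤ ‖ψ‖ := fun x => by
    simpa [Real.norm_eq_abs] using ψ.norm_coe_le_norm x
  have hint1 : Integrable (fun x => (g x : ℝ)) (m.restrict s) :=
    (integrable_of_bounded (g := fun x => (g x : ℝ)) ψ.continuous.measurable hCψ).restrict
  have hint2 : Integrable (fun x => (g x : ℝ)) ((m s) • m) :=
    (integrable_of_bounded (g := fun x => (g x : ℝ)) ψ.continuous.measurable
      hCψ).smul_measure (measure_ne_top m s)
  rw [lintegral_coe_eq_integral g hint1, lintegral_coe_eq_integral g hint2]
  congr 1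
  calc ∫ x, ((g x : ℝ)) ∂(m.restrict s) = ∫ x in s, ψ x ∂m := rfl
  _ = (m s).toReal * ∫ x, ψ x ∂m := hkey ψ
  _ = (m s).toReal * ∫ x, ((g x : ℝ)) ∂m := rfl
  _ = ∫ x, ((g x : ℝ)) ∂((m s) • m) := by
      rw [integral_smul_measure, smul_eq_mul]

end ErgodicGAux

open ErgodicGAux in
/-- A measure-preserving map `f` is ergodic if and only if it belongs to all the sets
`G(φ, a, ε)` — i.e. for each `φ` in a countable dense subset `D` of `C⁰(M,ℝ)`, each
rational `a` and each positive rational `ε`, either `m[φ_f ≥ a] ≥ 1 − ε` or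
`m[φ_f ≤ a] ≥ 1 − ε`. -/
theorem ergodic_iff_mem_all_G {M : Type*} [MetricSpace M] [CompactSpace M]
    [MeasurableSpace M] [BorelSpace M] (m : Measure M) [IsProbabilityMeasure m]
    (f : M → M) (hf : MeasurePreserving f m m)
    (D : Set C(M, ℝ)) (hDcount : D.Countable) (hDdense : Dense D) :
    Ergodic f m ↔
      ∀ φ ∈ D, ∀ a ε : ℚ, 0 < ε →
        (ENNReal.ofReal (1 - (ε : ℝ)) ≤ m (birkhoffGe f (⇑φ) (a : ℝ)) ∨
         ENNReal.ofReal (1 - (ε : ℝ)) ≤ m (birkhoffLe f (⇑φ) (a : ℝ))) := by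
  constructor
  · -- ergodic implies the averages converge a.e. to the space average
    intro hE φ _ a ε hε
    have hC : ∀ x, |φ x| ≤ ‖φ‖ := fun x => by
      simpa [Real.norm_eq_abs] using φ.norm_coe_le_norm x
    have h := ae_tendsto_birkhoff hE φ.continuous.measurable hC
    set I : ℝ := ∫ x, φ x ∂m with hI
    have hle1 : ENNReal.ofReal (1 - (ε : ℝ)) ≤ 1 := by
      refine ENNReal.ofReal_le_one.2 ?_
      have : (0 : ℝ) < ε := by exact_mod_cast hε
      linarith
    rcases le_or_gt ((a : ℝ)) I with ha | ha
    · left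
      have hfull : m (birkhoffGe f (⇑φ) (a : ℝ)) = 1 := by
        refine prob_eq_one_of_ae ?_
        filter_upwards [h] with x hx
        exact ⟨I, ha, hx⟩
      rw [hfull]
      exact hle1
    · right
      have hfull : m (birkhoffLe f (⇑φ) (a : ℝ)) = 1 := by
        refine prob_eq_one_of_ae ?_
        filter_upwards [h] with x hx
        exact ⟨I, ha.le, hx⟩
      rw [hfull]
      exact hle1
  · intro h
    refine ⟨hf, ⟨fun s hs hsinv => ?_⟩⟩
    -- the key identity, first for elements of `D`
    have hkeyD : ∀ ψ : C(M, ℝ), ψ ∈ D →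
        ∫ x in s, ψ x ∂m = (m s).toReal * ∫ x, ψ x ∂m := by
      intro ψ hψD
      have hC : ∀ x, |ψ x| ≤ ‖ψ‖ := fun x => by
        simpa [Real.norm_eq_abs] using ψ.norm_coe_le_norm x
      have hG : ∀ a : ℚ, m (birkhoffGe f (⇑ψ) (a : ℝ)) = 1 ∨
          m (birkhoffLe f (⇑ψ) (a : ℝ)) = 1 := fun a =>
        full_of_eps (fun ε hε => h ψ hψD a ε hε)
      obtain ⟨c, hc⟩ := exists_ae_tendsto_of_G hf.measurable ψ.continuous.measurable hC hG
      have h1 := setIntegral_eq_of_ae_tendsto hf ψ.continuous.measurable hC hc hs hsinv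
      have h2 := setIntegral_eq_of_ae_tendsto hf ψ.continuous.measurable hC hc
        MeasurableSet.univ Set.preimage_univ
      rw [setIntegral_univ, measure_univ, ENNReal.toReal_one, one_mul] at h2
      rw [h1, h2]
    -- then for all continuous functions, by density
    have hkey : ∀ ψ : C(M, ℝ), ∫ x in s, ψ x ∂m = (m s).toReal * ∫ x, ψ x ∂m := by
      intro ψ
      have hms : (m s).toReal ≤ 1 := by
        rw [← ENNReal.toReal_one]
        exact ENNReal.toReal_mono ENNReal.one_ne_top prob_le_one
      have hms0 : 0 ≤ (m s).toReal := ENNReal.toReal_nonneg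
      set d : ℝ := ∫ x in s, ψ x ∂m - (m s).toReal * ∫ x, ψ x ∂m with hd
      have hdle : ∀ δ : ℝ, 0 < δ → |d| ≤ 2 * δ := by
        intro δ hδ
        obtain ⟨χ, hχD, hdist⟩ := hDdense.exists_dist_lt ψ hδ
        have hb : ∀ x, |ψ x - χ x| ≤ δ := fun x => by
          have h1 : dist (ψ x) (χ x) ≤ dist ψ χ := ContinuousMap.dist_apply_le_dist x
          rw [Real.dist_eq] at h1
          linarith
        have hCψ : ∀ x, |ψ x| ≤ ‖ψ‖ := fun x => by
          simpa [Real.norm_eq_abs] using ψ.norm_coe_le_norm x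
        have hCχ : ∀ x, |χ x| ≤ ‖χ‖ := fun x => by
          simpa [Real.norm_eq_abs] using χ.norm_coe_le_norm x
        have hiψ : Integrable (⇑ψ) m := integrable_of_bounded ψ.continuous.measurable hCψ
        have hiχ : Integrable (⇑χ) m := integrable_of_bounded χ.continuous.measurable hCχ
        have e1 : |∫ x in s, ψ x ∂m - ∫ x in s, χ x ∂m| ≤ δ := by
          rw [← integral_sub hiψ.integrableOn hiχ.integrableOn]
          calc |∫ x in s, (ψ x - χ x) ∂m| ≤ δ * (m s).toReal := by
                have := norm_setIntegral_le_of_norm_le_const (μ := m) (s := s)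
                  (f := fun x => ψ x - χ x) (C := δ)
                  (lt_of_le_of_lt prob_le_one ENNReal.one_lt_top)
                  (fun x _ => by rw [Real.norm_eq_abs]; exact hb x)
                rw [Real.norm_eq_abs] at this; simpa [Measure.real] using this
          _ ≤ δ * 1 := by nlinarith
          _ = δ := mul_one δ
        have e2 : |∫ x, ψ x ∂m - ∫ x, χ x ∂m| ≤ δ := by
          rw [← integral_sub hiψ hiχ]
          calc |∫ x, (ψ x - χ x) ∂m| ≤ ∫ x, |ψ x - χ x| ∂m := by
                simpa [Real.norm_eq_abs] using
                  norm_integral_le_integral_norm (μ := m) (f := fun x => ψ x - χ x)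
          _ ≤ ∫ _x, δ ∂m := by
                refine integral_mono ?_ (integrable_const δ) fun x => hb x
                exact (hiψ.sub hiχ).abs
          _ = δ := by simp
        have hχeq := hkeyD χ hχD
        have : d = (∫ x in s, ψ x ∂m - ∫ x in s, χ x ∂m)
            + (m s).toReal * ((∫ x, χ x ∂m) - ∫ x, ψ x ∂m) := by
          rw [hd, hχeq]; ring
        rw [this]
        calc |(∫ x in s, ψ x ∂m - ∫ x in s, χ x ∂m)
            + (m s).toReal * ((∫ x, χ x ∂m) - ∫ x, ψ x ∂m)|
            ≤ |∫ x in s, ψ x ∂m - ∫ x in s, χ x ∂m|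
              + |(m s).toReal * ((∫ x, χ x ∂m) - ∫ x, ψ x ∂m)| := abs_add_le _ _
        _ ≤ δ + (m s).toReal * δ := by
              refine add_le_add e1 ?_
              rw [abs_mul, abs_of_nonneg hms0]
              refine mul_le_mul_of_nonneg_left ?_ hms0
              rw [abs_sub_comm]
              exact e2
        _ ≤ 2 * δ := by nlinarith
      have hd0 : |d| = 0 := by
        refine le_antisymm ?_ (abs_nonneg d)
        refine le_of_forall_pos_le_add fun δ hδ => ?_
        calc |d| ≤ 2 * (δ / 2) := hdle (δ / 2) (by linarith)
        _ = δ := by ring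
        _ ≤ 0 + δ := by linarith
      have := abs_eq_zero.1 hd0
      rw [hd] at this
      linarith [this]
    -- equality of measures
    have hmeq : m.restrict s = m s • m := restrict_eq_smul hs hkey
    have hself : m s = m s * m s := by
      have := congrArg (fun μ : Measure M => μ s) hmeq
      simpa [Measure.restrict_apply hs, Measure.smul_apply, smul_eq_mul] using this
    rcases eq_or_ne (m s) 0 with h0 | h0
    · exact Filter.eventuallyConst_set.2 (Or.inr (measure_eq_zero_iff_ae_notMem.mp h0))
    · have h1 : m s = 1 := by
        have htop : m s ≠ ⊤ := measure_ne_top m s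
        have : m s * 1 = m s * m s := by rw [mul_one]; exact hself
        exact ((ENNReal.mul_right_inj h0 htop).1 this).symm
      exact Filter.eventuallyConst_set.2 (Or.inl (ae_mem_of_prob_eq_one hs h1))
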